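/- arXiv:1805.02570 — 2 statements merged into one kernel-verified Lean document; each statement's English description precedes it below -/
import Mathlib

section
/- Let r be a point on the x-axis and p a point of the plane. For every point t with t₁ < p₁ (i.e. t ∈ H_p^L) satisfying dist(r,t) > dist(r,p) (i.e. t ∈ H_p^L − D_p(r)), there exists a unique point c on the x-axis with dist(c,p) = dist(c,t); moreover this c satisfies c₁ < r₁, i.e. the center of the unique circle centered on the x-axis passing through p and t lies strictly to the left of r. -/
lemma dist_sq_two (x y : EuclideanSpace ℝ (Fin 2)) :
    dist x y ^ 2 = (x 0 - y 0) ^ 2 + (x 1 - y 1) ^ 2 := by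
  rw [EuclideanSpace.dist_eq, Real.sq_sqrt (by positivity)]
  simp [Fin.sum_univ_two, Real.dist_eq, sq_abs]

lemma dist_eq_iff_sq (x y z w : EuclideanSpace ℝ (Fin 2)) :
    dist x y = dist z w ↔ dist x y ^ 2 = dist z w ^ 2 :=
  (sq_eq_sq₀ dist_nonneg dist_nonneg).symm

/-- Lemma 1(ii), second item: for a point `t` strictly to the left of `p`
lying outside the closed disk centered at `r` (on the x-axis) through `p`,
there is a unique point `c` on the x-axis equidistant from `p` and `t`, and it
lies strictly to the left of `r`. -/
theorem unique_center_left_halfplane_outside_disk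
    (r p t : EuclideanSpace ℝ (Fin 2))
    (hr : r 1 = 0) (ht : t 0 < p 0) (htd : dist r p < dist r t) :
    ∃ c : EuclideanSpace ℝ (Fin 2),
      (c 1 = 0 ∧ dist c p = dist c t ∧ c 0 < r 0) ∧
      ∀ c' : EuclideanSpace ℝ (Fin 2),
        c' 1 = 0 → dist c' p = dist c' t → c' = c := by
  set c0 : ℝ := (t 0 ^ 2 + t 1 ^ 2 - p 0 ^ 2 - p 1 ^ 2) / (2 * (t 0 - p 0)) with hc0
  have hden : t 0 - p 0 < 0 := by linarith
  -- key characterization: for c' on the axis, equidistance ↔ c' 0 = c0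
  have key : ∀ a : ℝ, ((a - p 0) ^ 2 + p 1 ^ 2 = (a - t 0) ^ 2 + t 1 ^ 2) ↔ a = c0 := by
    intro a
    rw [hc0, eq_div_iff (by nlinarith)]
    constructor <;> intro h <;> nlinarith
  refine ⟨WithLp.toLp 2 (fun i => if i = 0 then c0 else 0 : Fin 2 → ℝ), ⟨rfl, ?_, ?_⟩, ?_⟩
  · rw [dist_eq_iff_sq, dist_sq_two, dist_sq_two]
    show (c0 - p 0) ^ 2 + ((0:ℝ) - p 1) ^ 2 = (c0 - t 0) ^ 2 + ((0:ℝ) - t 1) ^ 2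
    linear_combination (key c0).mpr rfl
  · -- c0 < r 0
    show c0 < r 0
    have hrd : (r 0 - p 0) ^ 2 + p 1 ^ 2 < (r 0 - t 0) ^ 2 + t 1 ^ 2 := by
      have h2 := dist_sq_two r p
      have h3 := dist_sq_two r t
      have : dist r p ^ 2 < dist r t ^ 2 := by
        have := dist_nonneg (x := r) (y := p)
        nlinarith
      rw [h2, h3, hr] at this
      linarith
    -- expand: 2 r0 (t0 - p0) < t0²+t1²-p0²-p1², divide by negative
    rw [hc0, div_lt_iff_of_neg (by linarith)]
    nlinarith [hrd]
  · intro c' h1 h2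
    rw [dist_eq_iff_sq, dist_sq_two, dist_sq_two, h1] at h2
    have : c' 0 = c0 := (key (c' 0)).mp (by linarith [h2])
    ext i
    fin_cases i
    · exact this
    · exact h1
end

section
/- Let r be a point on the x-axis and p a point of the plane. For every point s' with s'₁ > p₁ (i.e. s' ∈ H_p^R) satisfying dist(r,s') < dist(r,p) (i.e. s' lies in the interior of H_p^R ∩ D_p(r)), there exists a unique point c on the x-axis with dist(c,p) = dist(c,s'); moreover this c satisfies c₁ < r₁, i.e. the center of the unique circle centered on the x-axis passing through p and s' lies strictly to the left of r. -/
lemma distsq_two (a b : EuclideanSpace ℝ (Fin 2)) :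
    (dist a b) ^ 2 = (a 0 - b 0) ^ 2 + (a 1 - b 1) ^ 2 := by
  rw [EuclideanSpace.dist_eq, Real.sq_sqrt (by positivity)]
  simp [Fin.sum_univ_two, Real.dist_eq, sq_abs]

lemma dist_eq_iff_sq_s4 (a b c : EuclideanSpace ℝ (Fin 2)) :
    dist a b = dist a c ↔ (dist a b) ^ 2 = (dist a c) ^ 2 := by
  constructor
  · intro h; rw [h]
  · intro h
    nlinarith [dist_nonneg (x := a) (y := b), dist_nonneg (x := a) (y := c)]

/-- Lemma 1(ii), third item: for a point `s'` strictly to the right of `p`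
lying in the interior of the disk centered at `r` (on the x-axis) through `p`,
there is a unique point `c` on the x-axis equidistant from `p` and `s'`, and it
lies strictly to the left of `r`. -/
theorem unique_center_right_halfplane_inside_disk
    (r p s' : EuclideanSpace ℝ (Fin 2))
    (hs : p 0 < s' 0) (hr : r 1 = 0) (hsd : dist r s' < dist r p) :
    ∃ c : EuclideanSpace ℝ (Fin 2),
      (c 1 = 0 ∧ dist c p = dist c s' ∧ c 0 < r 0) ∧
      ∀ c' : EuclideanSpace ℝ (Fin 2),
        c' 1 = 0 → dist c' p = dist c' s' → c' = c := by
  set x : ℝ := ((s' 0) ^ 2 + (s' 1) ^ 2 - (p 0) ^ 2 - (p 1) ^ 2) / (2 * (s' 0 - p 0)) with hx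
  have hd : s' 0 - p 0 > 0 := by linarith
  -- the key characterization for any point on the axis
  have key : ∀ c : EuclideanSpace ℝ (Fin 2), c 1 = 0 →
      (dist c p = dist c s' ↔ c 0 = x) := by
    intro c hc1
    rw [dist_eq_iff_sq_s4, distsq_two, distsq_two, hc1, hx]
    rw [eq_div_iff (by positivity)]
    constructor
    · intro h; nlinarith
    · intro h; nlinarith
  -- the candidate point
  refine ⟨!₂[x, 0], ⟨rfl, ?_, ?_⟩, ?_⟩
  · exact (key !₂[x, 0] rfl).mpr rfl
  · -- x < r 0
    have hsq : (dist r s') ^ 2 < (dist r p) ^ 2 := by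
      have := dist_nonneg (x := r) (y := s')
      nlinarith
    rw [distsq_two, distsq_two, hr] at hsq
    show x < r 0
    rw [hx, div_lt_iff₀ (by positivity)]
    nlinarith
  · intro c' hc1 hdc
    have hc0 : c' 0 = x := (key c' hc1).mp hdc
    ext i
    fin_cases i
    · exact hc0
    · exact hc1
end
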